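/- Let u : ℝ × (Fin 3 → ℝ) → (Fin 3 → ℝ) and π, l : ℝ × (Fin 3 → ℝ) → ℝ be twice continuously differentiable and satisfy, at every (t,x): ∂ₜπ + Σ_j u_j ∂_j π = 0, ∂ₜl + Σ_j u_j ∂_j l = 0, and div u = Σ_j ∂_j u_j = 0. Then the vector field w(t,x) := ∇π(t,x) × ∇l(t,x) (spatial gradients, standard cross product on ℝ³) satisfies the vorticity transport equation ∂ₜw = [w, u] := w·∇u − u·∇w, i.e. for each component i: ∂ₜw_i + Σ_j u_j ∂_j w_i = Σ_j w_j ∂_j u_i at every (t,x). -/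

import Mathlib

/-- The Clebsch vorticity `w = ∇π × ∇l` (spatial gradients) of two scalar
functions of `(t, x) ∈ ℝ × ℝ³`. -/
noncomputable def clebschVort (π l : ℝ × (Fin 3 → ℝ) → ℝ)
    (p : ℝ × (Fin 3 → ℝ)) : Fin 3 → ℝ :=
  crossProduct (fun i => fderiv ℝ π p (0, Pi.single i 1))
    (fun i => fderiv ℝ l p (0, Pi.single i 1))
noncomputable section

local notation "cE" => (ℝ × (Fin 3 → ℝ))

/-- material derivative operator -/
def mD (u : cE → Fin 3 → ℝ) (f : cE → ℝ) (p : cE) : ℝ :=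
  fderiv ℝ f p (1, 0) + ∑ j, u p j * fderiv ℝ f p (0, Pi.single j 1)

lemma contDiff_fderiv_apply {f : cE → ℝ} (hf : ContDiff ℝ 2 f) (v : cE) :
    ContDiff ℝ 1 fun q => fderiv ℝ f q v :=
  (ContinuousLinearMap.apply ℝ ℝ v).contDiff.comp (hf.fderiv_right le_rfl)

lemma fderiv_swap {f : cE → ℝ} (hf : ContDiff ℝ 2 f) (p v w : cE) :
    fderiv ℝ (fun q => fderiv ℝ f q w) p v = fderiv ℝ (fun q => fderiv ℝ f q v) p w := by
  have hdf : DifferentiableAt ℝ (fderiv ℝ f) p :=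
    ((hf.fderiv_right le_rfl).differentiable one_ne_zero) p
  have h : ∀ z : cE, fderiv ℝ (fun q => fderiv ℝ f q z) p
      = (fderiv ℝ (fderiv ℝ f) p).flip z := by
    intro z
    rw [show (fun q => fderiv ℝ f q z) = fun q => (fderiv ℝ f q) ((fun _ : cE => z) q) from rfl,
      fderiv_clm_apply hdf (differentiableAt_const z)]
    simp
  rw [h w, h v]
  simpa using (hf.contDiffAt.isSymmSndFDerivAt (by simp)) v w

lemma mD_mul (u : cE → Fin 3 → ℝ) {g h : cE → ℝ} {p : cE}
    (hg : DifferentiableAt ℝ g p) (hh : DifferentiableAt ℝ h p) :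
    mD u (fun q => g q * h q) p = g p * mD u h p + h p * mD u g p := by
  have key : ∀ v : cE, fderiv ℝ (fun q => g q * h q) p v
      = g p * fderiv ℝ h p v + h p * fderiv ℝ g p v := by
    intro v; rw [fderiv_fun_mul hg hh]; simp
  have hs1 : ∑ j : Fin 3, u p j * (g p * fderiv ℝ h p (0, Pi.single j 1)
        + h p * fderiv ℝ g p (0, Pi.single j 1))
      = g p * ∑ j : Fin 3, u p j * fderiv ℝ h p (0, Pi.single j 1)
        + h p * ∑ j : Fin 3, u p j * fderiv ℝ g p (0, Pi.single j 1) := by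
    rw [Finset.mul_sum, Finset.mul_sum, ← Finset.sum_add_distrib]
    exact Finset.sum_congr rfl fun j _ => by ring
  simp only [mD, key]
  rw [hs1]; ring

lemma mD_sub (u : cE → Fin 3 → ℝ) {g h : cE → ℝ} {p : cE}
    (hg : DifferentiableAt ℝ g p) (hh : DifferentiableAt ℝ h p) :
    mD u (fun q => g q - h q) p = mD u g p - mD u h p := by
  have key : ∀ v : cE, fderiv ℝ (fun q => g q - h q) p v
      = fderiv ℝ g p v - fderiv ℝ h p v := by
    intro v; rw [fderiv_fun_sub hg hh]; simp
  simp only [mD, key, mul_sub, Finset.sum_sub_distrib]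
  ring

lemma mD_grad (u : cE → Fin 3 → ℝ) {f : cE → ℝ}
    (hu : ContDiff ℝ 2 u) (hf : ContDiff ℝ 2 f)
    (hadv : ∀ p : cE, fderiv ℝ f p (1, 0)
        + ∑ j, u p j * fderiv ℝ f p (0, Pi.single j 1) = 0)
    (p : cE) (k : Fin 3) :
    mD u (fun q => fderiv ℝ f q (0, Pi.single k 1)) p
      = - ∑ j, fderiv ℝ (fun q => u q j) p (0, Pi.single k 1)
            * fderiv ℝ f p (0, Pi.single j 1) := by
  have huj : ∀ j, ContDiff ℝ 2 fun q => u q j := fun j => contDiff_pi.mp hu j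
  have hdA : ∀ (v : cE), DifferentiableAt ℝ (fun q => fderiv ℝ f q v) p :=
    fun v => ((contDiff_fderiv_apply hf v).differentiable one_ne_zero) p
  have h0 : fderiv ℝ (fun q => fderiv ℝ f q (1, 0)
      + ∑ j, u q j * fderiv ℝ f q (0, Pi.single j 1)) p (0, Pi.single k 1) = 0 := by
    have : (fun q : cE => fderiv ℝ f q (1, 0)
        + ∑ j, u q j * fderiv ℝ f q (0, Pi.single j 1)) = fun _ => 0 := funext hadv
    rw [this, fderiv_fun_const]; simp
  have hterm : ∀ j : Fin 3, DifferentiableAt ℝ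
      (fun q => u q j * fderiv ℝ f q (0, Pi.single j 1)) p :=
    fun j => (((huj j).differentiable two_ne_zero) p).mul (hdA _)
  rw [fderiv_fun_add (hdA _) (DifferentiableAt.fun_sum fun j _ => hterm j)] at h0
  rw [fderiv_fun_sum (fun j _ => hterm j)] at h0
  simp only [ContinuousLinearMap.add_apply, ContinuousLinearMap.sum_apply] at h0
  have hmul : ∀ j : Fin 3, fderiv ℝ (fun q => u q j * fderiv ℝ f q (0, Pi.single j 1)) p
      (0, Pi.single k 1)
      = fderiv ℝ (fun q => u q j) p (0, Pi.single k 1) * fderiv ℝ f p (0, Pi.single j 1)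
        + u p j * fderiv ℝ (fun q => fderiv ℝ f q (0, Pi.single k 1)) p (0, Pi.single j 1) := by
    intro j
    rw [fderiv_fun_mul (((huj j).differentiable two_ne_zero) p) (hdA _)]
    simp only [ContinuousLinearMap.add_apply, ContinuousLinearMap.smul_apply, smul_eq_mul]
    rw [fderiv_swap hf p (0, Pi.single k 1) (0, Pi.single j 1)]
    ring
  simp only [hmul, fderiv_swap hf p (0, Pi.single k 1) (1, 0)] at h0
  rw [Finset.sum_add_distrib] at h0
  simp only [mD]
  linarith [h0]

/-- **Vorticity transport for Euler flow in Clebsch variables.**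
If the scalar Clebsch functions `π, l` are advected by a divergence-free
`C²` velocity field `u` (`Dπ/Dt = 0 = Dl/Dt`, `div u = 0`), then
`w := ∇π × ∇l` satisfies the vorticity equation
`∂ₜw = [w, u] = w·∇u - u·∇w`, i.e. componentwise
`∂ₜwᵢ + Σⱼ uⱼ ∂ⱼwᵢ = Σⱼ wⱼ ∂ⱼuᵢ`. -/
theorem clebsch_vorticity_transport
    (u : ℝ × (Fin 3 → ℝ) → (Fin 3 → ℝ))
    (π l : ℝ × (Fin 3 → ℝ) → ℝ)
    (hu : ContDiff ℝ 2 u) (hπ : ContDiff ℝ 2 π) (hl : ContDiff ℝ 2 l)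
    (hadvπ : ∀ p : ℝ × (Fin 3 → ℝ),
      fderiv ℝ π p (1, 0)
        + ∑ j, u p j * fderiv ℝ π p (0, Pi.single j 1) = 0)
    (hadvl : ∀ p : ℝ × (Fin 3 → ℝ),
      fderiv ℝ l p (1, 0)
        + ∑ j, u p j * fderiv ℝ l p (0, Pi.single j 1) = 0)
    (hdiv : ∀ p : ℝ × (Fin 3 → ℝ),
      ∑ j, fderiv ℝ (fun q => u q j) p (0, Pi.single j 1) = 0) :
    ∀ (p : ℝ × (Fin 3 → ℝ)) (i : Fin 3),
      fderiv ℝ (fun q => clebschVort π l q i) p (1, 0)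
        + ∑ j, u p j * fderiv ℝ (fun q => clebschVort π l q i) p (0, Pi.single j 1)
      = ∑ j, clebschVort π l p j * fderiv ℝ (fun q => u q i) p (0, Pi.single j 1) := by
  intro p i
  have hdAπ : ∀ v : ℝ × (Fin 3 → ℝ), DifferentiableAt ℝ (fun q => fderiv ℝ π q v) p :=
    fun v => ((contDiff_fderiv_apply hπ v).differentiable one_ne_zero) p
  have hdAl : ∀ v : ℝ × (Fin 3 → ℝ), DifferentiableAt ℝ (fun q => fderiv ℝ l q v) p :=
    fun v => ((contDiff_fderiv_apply hl v).differentiable one_ne_zero) p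
  have hmπ := mD_grad u hu hπ hadvπ p
  have hml := mD_grad u hu hl hadvl p
  have hd := hdiv p
  rw [Fin.sum_univ_three] at hd
  simp only [Fin.sum_univ_three] at hmπ hml
  show mD u (fun q => clebschVort π l q i) p = _
  have hfun : ∀ j1 j2 : Fin 3, mD u (fun q =>
        fderiv ℝ π q (0, Pi.single j1 1) * fderiv ℝ l q (0, Pi.single j2 1)
        - fderiv ℝ π q (0, Pi.single j2 1) * fderiv ℝ l q (0, Pi.single j1 1)) p
      = fderiv ℝ π p (0, Pi.single j1 1) * mD u (fun q => fderiv ℝ l q (0, Pi.single j2 1)) p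
        + fderiv ℝ l p (0, Pi.single j2 1) * mD u (fun q => fderiv ℝ π q (0, Pi.single j1 1)) p
        - (fderiv ℝ π p (0, Pi.single j2 1) * mD u (fun q => fderiv ℝ l q (0, Pi.single j1 1)) p
        + fderiv ℝ l p (0, Pi.single j1 1) * mD u (fun q => fderiv ℝ π q (0, Pi.single j2 1)) p) := by
    intro j1 j2
    rw [mD_sub u ((hdAπ _).fun_mul (hdAl _)) ((hdAπ _).fun_mul (hdAl _)),
      mD_mul u (hdAπ _) (hdAl _), mD_mul u (hdAπ _) (hdAl _)]
  fin_cases i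
  · show mD u (fun q => clebschVort π l q 0) p
        = ∑ j, clebschVort π l p j * fderiv ℝ (fun q => u q 0) p (0, Pi.single j 1)
    have he : (fun q => clebschVort π l q 0) = fun q =>
        fderiv ℝ π q (0, Pi.single 1 1) * fderiv ℝ l q (0, Pi.single 2 1)
        - fderiv ℝ π q (0, Pi.single 2 1) * fderiv ℝ l q (0, Pi.single 1 1) := by
      funext q; simp [clebschVort, cross_apply]
    rw [he, hfun 1 2, hmπ 1, hmπ 2, hml 1, hml 2]
    simp only [clebschVort, cross_apply, Fin.sum_univ_three]
    simp only [Matrix.cons_val_zero, Matrix.cons_val_one, Matrix.head_cons,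
      Matrix.cons_val_two, Matrix.tail_cons]
    linear_combination (-(fderiv ℝ π p (0, Pi.single 1 1) * fderiv ℝ l p (0, Pi.single 2 1))
      + fderiv ℝ π p (0, Pi.single 2 1) * fderiv ℝ l p (0, Pi.single 1 1)) * hd
  · show mD u (fun q => clebschVort π l q 1) p
        = ∑ j, clebschVort π l p j * fderiv ℝ (fun q => u q 1) p (0, Pi.single j 1)
    have he : (fun q => clebschVort π l q 1) = fun q =>
        fderiv ℝ π q (0, Pi.single 2 1) * fderiv ℝ l q (0, Pi.single 0 1)
        - fderiv ℝ π q (0, Pi.single 0 1) * fderiv ℝ l q (0, Pi.single 2 1) := by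
      funext q; simp [clebschVort, cross_apply]
    rw [he, hfun 2 0, hmπ 2, hmπ 0, hml 2, hml 0]
    simp only [clebschVort, cross_apply, Fin.sum_univ_three]
    simp only [Matrix.cons_val_zero, Matrix.cons_val_one, Matrix.head_cons,
      Matrix.cons_val_two, Matrix.tail_cons]
    linear_combination (-(fderiv ℝ π p (0, Pi.single 2 1) * fderiv ℝ l p (0, Pi.single 0 1))
      + fderiv ℝ π p (0, Pi.single 0 1) * fderiv ℝ l p (0, Pi.single 2 1)) * hd
  · show mD u (fun q => clebschVort π l q 2) p
        = ∑ j, clebschVort π l p j * fderiv ℝ (fun q => u q 2) p (0, Pi.single j 1)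
    have he : (fun q => clebschVort π l q 2) = fun q =>
        fderiv ℝ π q (0, Pi.single 0 1) * fderiv ℝ l q (0, Pi.single 1 1)
        - fderiv ℝ π q (0, Pi.single 1 1) * fderiv ℝ l q (0, Pi.single 0 1) := by
      funext q; simp [clebschVort, cross_apply]
    rw [he, hfun 0 1, hmπ 0, hmπ 1, hml 0, hml 1]
    simp only [clebschVort, cross_apply, Fin.sum_univ_three]
    simp only [Matrix.cons_val_zero, Matrix.cons_val_one, Matrix.head_cons,
      Matrix.cons_val_two, Matrix.tail_cons]
    linear_combination (-(fderiv ℝ π p (0, Pi.single 0 1) * fderiv ℝ l p (0, Pi.single 1 1))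
      + fderiv ℝ π p (0, Pi.single 1 1) * fderiv ℝ l p (0, Pi.single 0 1)) * hd
end
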